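/- Let c, D > 0, let δ ∈ (0, c/(2D)), and set κ = √(1 − 4D²δ²/c²) ∈ (0,1). Then for every t ≥ 0: (i) for every μ with δ ≤ μ < c/(2D), H̃₁(μ,t) ≤ (1 + 1/κ)·exp(−Dδ²t); and (ii) for every μ ≥ c/(2D), |H̃(μ,t)| ≤ (1/κ)·exp(−Dδ²t). -/

import Mathlib

open MeasureTheory Real Set

/-- `H̃₁(μ,t)` for the subcritical regime `0 ≤ μ < c/(2D)`. -/
noncomputable def Htilde1 (c D μ t : ℝ) : ℝ :=
  Real.exp (-(c ^ 2 * t) / (2 * D)) *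
    (Real.cosh (c * t * Real.sqrt (c ^ 2 / (4 * D ^ 2) - μ ^ 2)) +
      c / (2 * D * Real.sqrt (c ^ 2 / (4 * D ^ 2) - μ ^ 2)) *
        Real.sinh (c * t * Real.sqrt (c ^ 2 / (4 * D ^ 2) - μ ^ 2)))

/-- `H̃₂(μ,t)` for the supercritical regime `μ > c/(2D)`. -/
noncomputable def Htilde2 (c D μ t : ℝ) : ℝ :=
  Real.exp (-(c ^ 2 * t) / (2 * D)) *
    (Real.cos (c * t * Real.sqrt (μ ^ 2 - c ^ 2 / (4 * D ^ 2))) +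
      c / (2 * D * Real.sqrt (μ ^ 2 - c ^ 2 / (4 * D ^ 2))) *
        Real.sin (c * t * Real.sqrt (μ ^ 2 - c ^ 2 / (4 * D ^ 2))))

/-- `H̃(μ,t)`, pieced together from `H̃₁`, the value at `μ = c/(2D)`, and `H̃₂`. -/
noncomputable def Htilde (c D μ t : ℝ) : ℝ :=
  if μ < c / (2 * D) then Htilde1 c D μ t
  else if μ = c / (2 * D) then Real.exp (-(c ^ 2 * t) / (2 * D)) * (1 + c ^ 2 * t / (2 * D))
  else Htilde2 c D μ t

lemma convexOn_sinh_Ici : ConvexOn ℝ (Set.Ici (0:ℝ)) Real.sinh := by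
  apply convexOn_of_deriv2_nonneg (convex_Ici 0) Real.continuous_sinh.continuousOn
    Real.differentiable_sinh.differentiableOn
  · rw [Real.deriv_sinh]
    exact Real.differentiable_cosh.differentiableOn
  · intro x hx
    have h2 : deriv^[2] Real.sinh = Real.sinh := by
      simp [Function.iterate_succ, Function.iterate_zero, Function.comp,
        Real.deriv_sinh, Real.deriv_cosh]
    rw [h2]
    rw [interior_Ici] at hx
    exact Real.sinh_nonneg_iff.mpr (le_of_lt hx)

lemma sinh_scale {l y : ℝ} (hl0 : 0 ≤ l) (hl1 : l ≤ 1) (hy : 0 ≤ y) :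
    Real.sinh (l * y) ≤ l * Real.sinh y := by
  have h := convexOn_sinh_Ici.2 (Set.mem_Ici.mpr hy) (Set.mem_Ici.mpr (le_refl 0)) hl0
    (by linarith : (0:ℝ) ≤ 1 - l) (by ring)
  simpa using h

lemma cosh_le_exp_self {x : ℝ} (hx : 0 ≤ x) : Real.cosh x ≤ Real.exp x := by
  rw [Real.cosh_eq]
  have : Real.exp (-x) ≤ Real.exp x := Real.exp_le_exp.mpr (by linarith)
  linarith

lemma sinh_le_exp_self (x : ℝ) : Real.sinh x ≤ Real.exp x := by
  rw [Real.sinh_eq]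
  have h1 := Real.exp_pos (-x)
  have h2 := Real.exp_pos x
  linarith

lemma one_add_le_inv_mul_exp {κ x : ℝ} (hκ0 : 0 < κ) (hκ1 : κ ≤ 1) (hx : 0 ≤ x) :
    1 + x ≤ (1 / κ) * Real.exp (κ * x) := by
  have h1 : 1 + κ * x ≤ Real.exp (κ * x) := by
    have := Real.add_one_le_exp (κ * x); linarith
  have h2 : κ * (1 + x) ≤ 1 + κ * x := by nlinarith
  calc 1 + x = (1 / κ) * (κ * (1 + x)) := by field_simp [hκ0.ne']
    _ ≤ (1 / κ) * Real.exp (κ * x) :=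
        mul_le_mul_of_nonneg_left (le_trans h2 h1) (one_div_nonneg.mpr hκ0.le)

set_option maxHeartbeats 2000000 in
/-- For `δ ∈ (0, c/(2D))` and `κ = √(1 − 4D²δ²/c²)`, for all `t ≥ 0`:
(i) `H̃₁(μ,t) ≤ (1 + 1/κ)·exp(−Dδ²t)` for `δ ≤ μ < c/(2D)`;
(ii) `|H̃(μ,t)| ≤ (1/κ)·exp(−Dδ²t)` for `μ ≥ c/(2D)`. -/
theorem Htilde_exponential_decay_bounds
    (c D δ κ : ℝ) (hc : 0 < c) (hD : 0 < D) (hδ0 : 0 < δ) (hδ : δ < c / (2 * D))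
    (hκ : κ = Real.sqrt (1 - 4 * D ^ 2 * δ ^ 2 / c ^ 2)) :
    ∀ t : ℝ, 0 ≤ t →
      (∀ μ : ℝ, δ ≤ μ → μ < c / (2 * D) →
        Htilde1 c D μ t ≤ (1 + 1 / κ) * Real.exp (-(D * δ ^ 2 * t))) ∧
      (∀ μ : ℝ, c / (2 * D) ≤ μ →
        |Htilde c D μ t| ≤ (1 / κ) * Real.exp (-(D * δ ^ 2 * t))) := by
  have hδ2D : δ * (2 * D) < c := (lt_div_iff₀ (by positivity)).mp hδ
  have harg : 0 < 1 - 4 * D ^ 2 * δ ^ 2 / c ^ 2 := by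
    rw [sub_pos, div_lt_one (by positivity)]
    nlinarith [mul_pos hδ0 hD, sq_nonneg (c - δ * (2 * D))]
  have hκ0 : 0 < κ := hκ ▸ Real.sqrt_pos.mpr harg
  have hκsq : κ ^ 2 = 1 - 4 * D ^ 2 * δ ^ 2 / c ^ 2 := by
    rw [hκ, sq, Real.mul_self_sqrt harg.le]
  have hκ1 : κ ≤ 1 := by
    have hxpos : 0 < 4 * D ^ 2 * δ ^ 2 / c ^ 2 := by positivity
    nlinarith [sq_nonneg κ]
  have h4 : 4 * D ^ 2 * δ ^ 2 = c ^ 2 * (1 - κ ^ 2) := by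
    field_simp at hκsq
    linarith
  intro t ht
  have hX : 0 ≤ c ^ 2 * t / (2 * D) := div_nonneg (mul_nonneg (by positivity) ht) (by positivity)
  have hkey : -(c ^ 2 * t) / (2 * D) + κ * (c ^ 2 * t / (2 * D)) ≤ -(D * δ ^ 2 * t) := by
    have h1 : 2 * D ^ 2 * δ ^ 2 ≤ (1 - κ) * c ^ 2 := by nlinarith [sq_nonneg (c * (1 - κ))]
    have h2 := mul_le_mul_of_nonneg_left h1 (show (0:ℝ) ≤ t / (2 * D) by positivity)
    have h3 : t / (2 * D) * (2 * D ^ 2 * δ ^ 2) = D * δ ^ 2 * t := by field_simp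
    have h5 : t / (2 * D) * ((1 - κ) * c ^ 2)
        = -(-(c ^ 2 * t) / (2 * D) + κ * (c ^ 2 * t / (2 * D))) := by field_simp; ring
    linarith
  constructor
  · -- part (i)
    intro μ hμδ hμa
    obtain ⟨s, hs⟩ : ∃ x, Real.sqrt (c ^ 2 / (4 * D ^ 2) - μ ^ 2) = x := ⟨_, rfl⟩
    have hμ2D : μ * (2 * D) < c := (lt_div_iff₀ (by positivity)).mp hμa
    have hμpos : 0 < μ := lt_of_lt_of_le hδ0 hμδ
    have hs0 : 0 < s := by
      rw [← hs]
      refine Real.sqrt_pos.mpr ?_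
      rw [sub_pos, lt_div_iff₀ (by positivity)]
      nlinarith [mul_pos hμpos hD, sq_nonneg (c - μ * (2 * D))]
    have haκsq : (c / (2 * D) * κ) ^ 2 = c ^ 2 / (4 * D ^ 2) - δ ^ 2 := by
      field_simp [hD.ne']
      nlinarith [h4]
    have hsle : s ≤ c / (2 * D) * κ := by
      rw [← hs]
      calc Real.sqrt (c ^ 2 / (4 * D ^ 2) - μ ^ 2)
          ≤ Real.sqrt ((c / (2 * D) * κ) ^ 2) := by
            apply Real.sqrt_le_sqrt
            rw [haκsq]
            nlinarith
        _ = c / (2 * D) * κ := Real.sqrt_sq (mul_pos (by positivity : (0:ℝ) < c / (2 * D)) hκ0).le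
    have haκpos : 0 < c / (2 * D) * κ := mul_pos (by positivity) hκ0
    have hct : 0 ≤ c * t := mul_nonneg hc.le ht
    have hctaκ : 0 ≤ c * t * (c / (2 * D) * κ) := mul_nonneg hct haκpos.le
    have hargeq : c * t * (c / (2 * D) * κ) = κ * (c ^ 2 * t / (2 * D)) := by
      field_simp
    have hle2 : c * t * s ≤ κ * (c ^ 2 * t / (2 * D)) := by
      rw [← hargeq]
      exact mul_le_mul_of_nonneg_left hsle hct
    have hcosh : Real.cosh (c * t * s) ≤ Real.exp (κ * (c ^ 2 * t / (2 * D))) :=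
      le_trans (cosh_le_exp_self (mul_nonneg hct hs0.le)) (Real.exp_le_exp.mpr hle2)
    have hsinh : Real.sinh (c * t * s) ≤ s / (c / (2 * D) * κ) * Real.sinh (c * t * (c / (2 * D) * κ)) := by
      calc Real.sinh (c * t * s)
          = Real.sinh (s / (c / (2 * D) * κ) * (c * t * (c / (2 * D) * κ))) := by
            congr 1
            field_simp [hs0.ne', hκ0.ne']
        _ ≤ _ := sinh_scale (div_nonneg hs0.le haκpos.le) ((div_le_one haκpos).mpr hsle) hctaκ
    have hcoefpos : 0 < c / (2 * D * s) := div_pos hc (by positivity)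
    have h6 : c / (2 * D * s) * Real.sinh (c * t * s)
        ≤ c / (2 * D * s) * (s / (c / (2 * D) * κ) * Real.sinh (c * t * (c / (2 * D) * κ))) :=
      mul_le_mul_of_nonneg_left hsinh hcoefpos.le
    have h7 : c / (2 * D * s) * (s / (c / (2 * D) * κ) * Real.sinh (c * t * (c / (2 * D) * κ)))
        = 1 / κ * Real.sinh (c * t * (c / (2 * D) * κ)) := by
      field_simp [hs0.ne', hκ0.ne']
    have h8 : Real.sinh (c * t * (c / (2 * D) * κ)) ≤ Real.exp (κ * (c ^ 2 * t / (2 * D))) := by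
      rw [hargeq]
      exact sinh_le_exp_self _
    have hsinhfin : c / (2 * D * s) * Real.sinh (c * t * s)
        ≤ 1 / κ * Real.exp (κ * (c ^ 2 * t / (2 * D))) := by
      rw [h7] at h6
      exact le_trans h6 (mul_le_mul_of_nonneg_left h8 (one_div_nonneg.mpr hκ0.le))
    have hB : Real.cosh (c * t * s) + c / (2 * D * s) * Real.sinh (c * t * s)
        ≤ (1 + 1 / κ) * Real.exp (κ * (c ^ 2 * t / (2 * D))) := by
      have : (1 + 1 / κ) * Real.exp (κ * (c ^ 2 * t / (2 * D)))
          = Real.exp (κ * (c ^ 2 * t / (2 * D))) + 1 / κ * Real.exp (κ * (c ^ 2 * t / (2 * D))) := by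
        ring
      rw [this]
      exact add_le_add hcosh hsinhfin
    calc Htilde1 c D μ t
        = Real.exp (-(c ^ 2 * t) / (2 * D)) *
            (Real.cosh (c * t * s) + c / (2 * D * s) * Real.sinh (c * t * s)) := by
          rw [Htilde1, hs]
      _ ≤ Real.exp (-(c ^ 2 * t) / (2 * D)) * ((1 + 1 / κ) * Real.exp (κ * (c ^ 2 * t / (2 * D)))) :=
          mul_le_mul_of_nonneg_left hB (Real.exp_nonneg _)
      _ = (1 + 1 / κ) * Real.exp (-(c ^ 2 * t) / (2 * D) + κ * (c ^ 2 * t / (2 * D))) := by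
          rw [Real.exp_add]; ring
      _ ≤ (1 + 1 / κ) * Real.exp (-(D * δ ^ 2 * t)) :=
          mul_le_mul_of_nonneg_left (Real.exp_le_exp.mpr hkey)
            (add_nonneg zero_le_one (one_div_nonneg.mpr hκ0.le))
  · -- part (ii)
    intro μ hμ
    have hfin : Real.exp (-(c ^ 2 * t) / (2 * D)) * (1 + c ^ 2 * t / (2 * D))
        ≤ 1 / κ * Real.exp (-(D * δ ^ 2 * t)) := by
      have h1 : 1 + c ^ 2 * t / (2 * D) ≤ 1 / κ * Real.exp (κ * (c ^ 2 * t / (2 * D))) :=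
        one_add_le_inv_mul_exp hκ0 hκ1 hX
      calc Real.exp (-(c ^ 2 * t) / (2 * D)) * (1 + c ^ 2 * t / (2 * D))
          ≤ Real.exp (-(c ^ 2 * t) / (2 * D)) * (1 / κ * Real.exp (κ * (c ^ 2 * t / (2 * D)))) :=
            mul_le_mul_of_nonneg_left h1 (Real.exp_nonneg _)
        _ = 1 / κ * Real.exp (-(c ^ 2 * t) / (2 * D) + κ * (c ^ 2 * t / (2 * D))) := by
            rw [Real.exp_add]; ring
        _ ≤ 1 / κ * Real.exp (-(D * δ ^ 2 * t)) :=
            mul_le_mul_of_nonneg_left (Real.exp_le_exp.mpr hkey) (one_div_nonneg.mpr hκ0.le)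
    rcases eq_or_lt_of_le hμ with heq | hlt
    · rw [Htilde, if_neg (by rw [← heq]; exact lt_irrefl _), if_pos heq.symm]
      rw [abs_of_nonneg (mul_nonneg (Real.exp_nonneg _) (by linarith))]
      exact hfin
    · rw [Htilde, if_neg (not_lt.mpr hμ), if_neg hlt.ne', Htilde2]
      set s : ℝ := Real.sqrt (μ ^ 2 - c ^ 2 / (4 * D ^ 2)) with hs
      have hμpos : 0 < μ := lt_trans (by positivity) hlt
      have hμ2D : c < μ * (2 * D) := (div_lt_iff₀ (by positivity)).mp hlt
      have hs0 : 0 < s :=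
        Real.sqrt_pos.mpr (by rw [sub_pos, div_lt_iff₀ (by positivity)]; nlinarith)
      have hcoefpos : 0 < c / (2 * D * s) := div_pos hc (by positivity)
      have habs : |Real.cos (c * t * s) + c / (2 * D * s) * Real.sin (c * t * s)|
          ≤ 1 + c ^ 2 * t / (2 * D) := by
        have h9 : |Real.cos (c * t * s)| ≤ 1 := Real.abs_cos_le_one _
        have h10 : |Real.sin (c * t * s)| ≤ c * t * s := by
          refine le_trans Real.abs_sin_le_abs ?_
          rw [abs_of_nonneg (mul_nonneg (mul_nonneg hc.le ht) hs0.le)]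
        have h11 : c / (2 * D * s) * (c * t * s) = c ^ 2 * t / (2 * D) := by
          field_simp [hs0.ne']
        calc |Real.cos (c * t * s) + c / (2 * D * s) * Real.sin (c * t * s)|
            ≤ |Real.cos (c * t * s)| + |c / (2 * D * s) * Real.sin (c * t * s)| := abs_add_le _ _
          _ ≤ 1 + c / (2 * D * s) * (c * t * s) := by
              rw [abs_mul, abs_of_pos hcoefpos]
              exact add_le_add h9 (mul_le_mul_of_nonneg_left h10 hcoefpos.le)
          _ = 1 + c ^ 2 * t / (2 * D) := by rw [h11]
      calc |Real.exp (-(c ^ 2 * t) / (2 * D)) *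
            (Real.cos (c * t * s) + c / (2 * D * s) * Real.sin (c * t * s))|
          = Real.exp (-(c ^ 2 * t) / (2 * D)) *
            |Real.cos (c * t * s) + c / (2 * D * s) * Real.sin (c * t * s)| := by
            rw [abs_mul, abs_of_pos (Real.exp_pos _)]
        _ ≤ Real.exp (-(c ^ 2 * t) / (2 * D)) * (1 + c ^ 2 * t / (2 * D)) :=
            mul_le_mul_of_nonneg_left habs (Real.exp_nonneg _)
        _ ≤ 1 / κ * Real.exp (-(D * δ ^ 2 * t)) := hfin
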